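/- In the Equal-Filling algorithm, let f(θ) for θ ∈ [0,1] be the number of agents of a fixed class i with final utility at least θ. Then for every θ ∈ (0,1] and every other class j, the optimistic value of class i for class j's fractional bundle satisfies V*ᵢ(Yⱼ) ≤ ∫₀^θ f(z) dz + f(θ). -/

import Mathlib

open Finset

noncomputable section

variable {A : Type*} [Fintype A] [DecidableEq A] {k : ℕ}

/-- The set of agents that like the item arriving at step `t`. -/
def likersAt (L : List (Finset A)) (t : ℕ) : Finset A := L.getD t ∅

/-- The agents of class `i`. -/
def classAgents (classOf : A → Fin k) (i : Fin k) : Finset A :=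
  Finset.univ.filter fun a => classOf a = i

/-- One step of the Equal-Filling algorithm: given current utilities `u` and the
liker set of the arriving item, the item is split equally among classes with an
unsaturated liking agent (each class receives `min β (demand)` where `β` is largest
with total at most 1), and within each class it is water-filled among the liking
agents, raising the lowest utilities to a common level `γ`. Returns the fraction of
the item given to each agent. -/
def efStep (classOf : A → Fin k) (u : A → ℝ) (likers : Finset A) : A → ℝ :=
  let d : Fin k → ℝ := fun i => ∑ a ∈ likers.filter fun a => classOf a = i, (1 - u a)
  let β : ℝ := sSup {b : ℝ | b ≤ 1 ∧ ∑ i : Fin k, min b (d i) ≤ 1}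
  fun a =>
    if a ∈ likers then
      let i := classOf a
      let γ : ℝ := sSup {g : ℝ | g ≤ 1 ∧
        ∑ a' ∈ likers.filter fun a' => classOf a' = i, max (g - u a') 0 ≤ min β (d i)}
      max (γ - u a) 0
    else 0

/-- The utility (total fraction received) of each agent before step `t` of
Equal-Filling on instance `L`. -/
def efUtil (classOf : A → Fin k) (L : List (Finset A)) : ℕ → A → ℝ
  | 0 => fun _ => 0
  | t + 1 => fun a =>
      efUtil classOf L t a + efStep classOf (efUtil classOf L t) (likersAt L t) a

/-- The fraction of item `t` given to each agent by Equal-Filling. -/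
def efAlloc (classOf : A → Fin k) (L : List (Finset A)) (t : ℕ) : A → ℝ :=
  efStep classOf (efUtil classOf L t) (likersAt L t)


/-- Optimistic fractional valuation `V*` of the class with agents `C` for an item
bundle `y`. -/
def VstarFrac (L : List (Finset A)) (C : Finset A) (y : ℕ → ℝ) : ℝ :=
  sSup {v : ℝ | ∃ x : ℕ → A → ℝ,
    (∀ t a, 0 ≤ x t a) ∧
    (∀ t a, x t a ≠ 0 → a ∈ C ∧ a ∈ likersAt L t ∧ t < L.length) ∧
    (∀ t, ∑ a ∈ C, x t a ≤ y t) ∧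
    (∀ a, ∑ t ∈ Finset.range L.length, x t a ≤ 1) ∧
    v = ∑ t ∈ Finset.range L.length, ∑ a ∈ C, x t a}

/-- `efCount classOf L i θ` is the number of agents of class `i` whose final utility
under Equal-Filling is at least `θ`. -/
def efCount (classOf : A → Fin k) (L : List (Finset A)) (i : Fin k) (θ : ℝ) : ℝ :=
  ((classAgents classOf i).filter fun a => θ ≤ efUtil classOf L L.length a).card

-- my auxiliary defs
def dem (classOf : A → Fin k) (u : A → ℝ) (likers : Finset A) (i : Fin k) : ℝ :=
  ∑ a ∈ likers.filter fun a => classOf a = i, (1 - u a)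

def beta (classOf : A → Fin k) (u : A → ℝ) (likers : Finset A) : ℝ :=
  sSup {b : ℝ | b ≤ 1 ∧ ∑ i : Fin k, min b (dem classOf u likers i) ≤ 1}

def wf (classOf : A → Fin k) (u : A → ℝ) (likers : Finset A) (i : Fin k) (g : ℝ) : ℝ :=
  ∑ a' ∈ likers.filter fun a' => classOf a' = i, max (g - u a') 0

def gam (classOf : A → Fin k) (u : A → ℝ) (likers : Finset A) (i : Fin k) : ℝ :=
  sSup {g : ℝ | g ≤ 1 ∧
    wf classOf u likers i g ≤ min (beta classOf u likers) (dem classOf u likers i)}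

lemma efStep_eq (classOf : A → Fin k) (u : A → ℝ) (likers : Finset A) (a : A) :
    efStep classOf u likers a =
      if a ∈ likers then max (gam classOf u likers (classOf a) - u a) 0 else 0 := rfl

variable {classOf : A → Fin k} {u : A → ℝ} {likers : Finset A}

lemma wf_cont (i : Fin k) : Continuous (wf classOf u likers i) := by
  unfold wf
  exact continuous_finset_sum _ fun a _ =>
    ((continuous_id.sub continuous_const).max continuous_const)

lemma wf_mono (i : Fin k) : Monotone (wf classOf u likers i) := by
  intro g g' h
  exact Finset.sum_le_sum fun a _ => max_le_max (by linarith) le_rfl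

section bounds
variable (hu0 : ∀ a, 0 ≤ u a) (hu1 : ∀ a, u a ≤ 1)

include hu1 in
lemma dem_nonneg (i : Fin k) : 0 ≤ dem classOf u likers i :=
  Finset.sum_nonneg fun a _ => by linarith [hu1 a]

include hu1 in
lemma beta_mem : beta classOf u likers ≤ 1 ∧
    ∑ i' : Fin k, min (beta classOf u likers) (dem classOf u likers i') ≤ 1 := by
  have h0 : (0:ℝ) ∈ {b : ℝ | b ≤ 1 ∧ ∑ i' : Fin k, min b (dem classOf u likers i') ≤ 1} := by
    refine ⟨zero_le_one, ?_⟩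
    have : ∀ i' : Fin k, min (0:ℝ) (dem classOf u likers i') = 0 := fun i' =>
      min_eq_left (dem_nonneg hu1 i')
    simp [this]
  have hcl : IsClosed {b : ℝ | b ≤ 1 ∧ ∑ i' : Fin k, min b (dem classOf u likers i') ≤ 1} := by
    have : {b : ℝ | b ≤ 1 ∧ ∑ i' : Fin k, min b (dem classOf u likers i') ≤ 1} =
        {b : ℝ | b ≤ 1} ∩ {b : ℝ | ∑ i' : Fin k, min b (dem classOf u likers i') ≤ 1} := rfl
    rw [this]
    exact (isClosed_le continuous_id continuous_const).inter
      (isClosed_le (continuous_finset_sum _ fun i' _ =>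
        continuous_id.min continuous_const) continuous_const)
  have hbdd : BddAbove {b : ℝ | b ≤ 1 ∧ ∑ i' : Fin k, min b (dem classOf u likers i') ≤ 1} :=
    ⟨1, fun b hb => hb.1⟩
  exact hcl.csSup_mem ⟨0, h0⟩ hbdd

include hu1 in
lemma beta_nonneg : 0 ≤ beta classOf u likers := by
  apply le_csSup ⟨1, fun b hb => hb.1⟩
  refine ⟨zero_le_one, ?_⟩
  have : ∀ i' : Fin k, min (0:ℝ) (dem classOf u likers i') = 0 := fun i' =>
    min_eq_left (dem_nonneg hu1 i')
  simp [this]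

include hu0 hu1 in
lemma gam_mem (i : Fin k) : gam classOf u likers i ≤ 1 ∧
    wf classOf u likers i (gam classOf u likers i) ≤
      min (beta classOf u likers) (dem classOf u likers i) := by
  set c := min (beta classOf u likers) (dem classOf u likers i) with hc
  have hc0 : 0 ≤ c := le_min (beta_nonneg hu1) (dem_nonneg hu1 i)
  have h0 : (0:ℝ) ∈ {g : ℝ | g ≤ 1 ∧ wf classOf u likers i g ≤ c} := by
    refine ⟨zero_le_one, ?_⟩
    have : wf classOf u likers i 0 = 0 := by
      unfold wf
      exact Finset.sum_eq_zero fun a _ => max_eq_right (by linarith [hu0 a])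
    rw [this]; exact hc0
  have hcl : IsClosed {g : ℝ | g ≤ 1 ∧ wf classOf u likers i g ≤ c} := by
    have : {g : ℝ | g ≤ 1 ∧ wf classOf u likers i g ≤ c} =
        {g : ℝ | g ≤ 1} ∩ {g : ℝ | wf classOf u likers i g ≤ c} := rfl
    rw [this]
    exact (isClosed_le continuous_id continuous_const).inter
      (isClosed_le (wf_cont i) continuous_const)
  exact hcl.csSup_mem ⟨0, h0⟩ ⟨1, fun b hb => hb.1⟩

include hu1 in
lemma wf_one (i : Fin k) : wf classOf u likers i 1 = dem classOf u likers i := by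
  unfold wf dem
  exact Finset.sum_congr rfl fun a _ => max_eq_left (by linarith [hu1 a])

include hu0 hu1 in
lemma gam_wf_eq (i : Fin k) : wf classOf u likers i (gam classOf u likers i) =
    min (beta classOf u likers) (dem classOf u likers i) := by
  set c := min (beta classOf u likers) (dem classOf u likers i) with hc
  obtain ⟨hg1, hgle⟩ := gam_mem hu0 hu1 i
  refine le_antisymm hgle ?_
  by_contra hlt
  push_neg at hlt
  have hc1 : c ≤ wf classOf u likers i 1 := by
    rw [wf_one hu1 i]; exact min_le_right _ _
  obtain ⟨g, hgIcc, hgc⟩ := intermediate_value_Icc hg1 ((wf_cont i).continuousOn)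
    ⟨hlt.le, hc1⟩
  have hgmem : g ∈ {g : ℝ | g ≤ 1 ∧ wf classOf u likers i g ≤ c} := ⟨hgIcc.2, hgc.le⟩
  have : g ≤ gam classOf u likers i := le_csSup ⟨1, fun b hb => hb.1⟩ hgmem
  have := wf_mono (likers := likers) (u := u) (classOf := classOf) i this
  rw [hgc] at this
  exact absurd (lt_of_le_of_lt this hlt) (lt_irrefl _)

end bounds

set_option linter.unusedSectionVars false

lemma gam_le_one (i : Fin k) : gam classOf u likers i ≤ 1 :=
  Real.sSup_le (fun g hg => hg.1) zero_le_one

lemma efStep_nonneg (a : A) : 0 ≤ efStep classOf u likers a := by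
  rw [efStep_eq]; split
  · exact le_max_right _ _
  · exact le_rfl

lemma efStep_le (hu1 : ∀ a, u a ≤ 1) (a : A) :
    efStep classOf u likers a ≤ 1 - u a := by
  rw [efStep_eq]; split
  · exact max_le (by linarith [gam_le_one (classOf := classOf) (u := u) (likers := likers) (classOf a)]) (by linarith [hu1 a])
  · linarith [hu1 a]

-- sum of step over a class equals min β d
lemma class_filter_eq (j : Fin k) :
    (classAgents classOf j).filter (fun a => a ∈ likers) =
      likers.filter fun a => classOf a = j := by
  ext a; simp [classAgents, mem_filter, and_comm]

lemma sum_step_class (hu0 : ∀ a, 0 ≤ u a) (hu1 : ∀ a, u a ≤ 1) (j : Fin k) :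
    ∑ a ∈ classAgents classOf j, efStep classOf u likers a =
      min (beta classOf u likers) (dem classOf u likers j) := by
  have h1 : ∑ a ∈ classAgents classOf j, efStep classOf u likers a =
      ∑ a ∈ (classAgents classOf j).filter (fun a => a ∈ likers),
        max (gam classOf u likers (classOf a) - u a) 0 := by
    rw [Finset.sum_filter]
    exact Finset.sum_congr rfl fun a _ => by rw [efStep_eq]
  rw [h1, class_filter_eq]
  have h2 : ∀ a ∈ likers.filter (fun a => classOf a = j),
      max (gam classOf u likers (classOf a) - u a) 0 =
        max (gam classOf u likers j - u a) 0 := by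
    intro a ha
    rw [(Finset.mem_filter.mp ha).2]
  rw [Finset.sum_congr rfl h2]
  exact gam_wf_eq hu0 hu1 j

/-- Key per-step inequality. -/
lemma step_key (hu0 : ∀ a, 0 ≤ u a) (hu1 : ∀ a, u a ≤ 1) (i j : Fin k)
    {θ : ℝ} (hθ1 : θ ≤ 1)
    {a0 : A} (ha0c : classOf a0 = i) (ha0l : a0 ∈ likers)
    (ha0γ : gam classOf u likers i < θ) (ha0u : u a0 < θ) :
    ∑ a ∈ classAgents classOf j, efStep classOf u likers a ≤
      ∑ a ∈ classAgents classOf i,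
        (min θ (u a + efStep classOf u likers a) - min θ (u a)) := by
  have hRHS : ∑ a ∈ classAgents classOf i,
      (min θ (u a + efStep classOf u likers a) - min θ (u a)) =
      ∑ a ∈ classAgents classOf i, efStep classOf u likers a := by
    refine Finset.sum_congr rfl fun a ha => ?_
    have hci : classOf a = i := by simpa [classAgents] using ha
    rw [efStep_eq, hci]
    by_cases hl : a ∈ likers
    · simp only [if_pos hl]
      rcases le_or_gt (gam classOf u likers i) (u a) with h | h
      · rw [max_eq_right (by linarith)]; ring
      · rw [max_eq_left (by linarith)]
        have hua : u a < θ := lt_trans h ha0γ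
        rw [show u a + (gam classOf u likers i - u a) = gam classOf u likers i by ring,
          min_eq_right ha0γ.le, min_eq_right hua.le]
    · simp only [if_neg hl]; ring
  rw [hRHS, sum_step_class hu0 hu1 j, sum_step_class hu0 hu1 i]
  -- suffices β ≤ dem i
  have hβd : beta classOf u likers ≤ dem classOf u likers i := by
    by_contra hlt
    push_neg at hlt
    have heq : wf classOf u likers i (gam classOf u likers i) = dem classOf u likers i := by
      rw [gam_wf_eq hu0 hu1 i, min_eq_right hlt.le]
    have hle : ∀ a ∈ likers.filter (fun a => classOf a = i),
        max (gam classOf u likers i - u a) 0 ≤ 1 - u a := fun a _ =>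
      max_le (by linarith [gam_le_one (classOf := classOf) (u := u) (likers := likers) i]) (by linarith [hu1 a])
    have hterm := (Finset.sum_eq_sum_iff_of_le hle).mp heq
    have ha0mem : a0 ∈ likers.filter (fun a => classOf a = i) :=
      Finset.mem_filter.mpr ⟨ha0l, ha0c⟩
    have h0 := hterm a0 ha0mem
    have h1 : (0:ℝ) < 1 - u a0 := by linarith
    have : gam classOf u likers i - u a0 = 1 - u a0 := by
      rcases max_cases (gam classOf u likers i - u a0) (0:ℝ) with ⟨he, _⟩ | ⟨he, _⟩ <;>
        rw [he] at h0 <;> linarith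
    linarith
  rw [min_eq_left hβd]
  exact min_le_left _ _





lemma efUtil_bounds (classOf : A → Fin k) (L : List (Finset A)) (t : ℕ) :
    ∀ a, 0 ≤ efUtil classOf L t a ∧ efUtil classOf L t a ≤ 1 := by
  induction t with
  | zero => intro a; simp [efUtil]
  | succ t ih =>
      intro a
      have h1 := efStep_nonneg (classOf := classOf) (u := efUtil classOf L t)
        (likers := likersAt L t) a
      have h2 := efStep_le (classOf := classOf) (u := efUtil classOf L t)
        (likers := likersAt L t) (fun a => (ih a).2) a
      constructor
      · show 0 ≤ efUtil classOf L t a + _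
        linarith [(ih a).1]
      · show efUtil classOf L t a + _ ≤ 1
        linarith

lemma efUtil_mono (classOf : A → Fin k) (L : List (Finset A)) {s t : ℕ} (h : s ≤ t) (a : A) :
    efUtil classOf L s a ≤ efUtil classOf L t a := by
  induction t with
  | zero => simp_all
  | succ t ih =>
      rcases Nat.lt_or_ge s (t+1) with h' | h'
      · have := ih (Nat.lt_succ_iff.mp h')
        have h2 := efStep_nonneg (classOf := classOf) (u := efUtil classOf L t)
          (likers := likersAt L t) a
        show efUtil classOf L s a ≤ efUtil classOf L t a + _
        linarith
      · have : s = t + 1 := le_antisymm h h'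
        subst this; exact le_rfl

lemma integral_ite {θ c : ℝ} (hθ : 0 < θ) (hc : 0 ≤ c) :
    ∫ z in (0:ℝ)..θ, (if z ≤ c then (1:ℝ) else 0) = min θ c := by
  rw [intervalIntegral.integral_of_le hθ.le]
  have h1 : ∀ z : ℝ, (if z ≤ c then (1:ℝ) else 0) =
      Set.indicator (Set.Iic c) (fun _ => (1:ℝ)) z := by
    intro z; simp [Set.indicator_apply, Set.mem_Iic]
  simp_rw [h1]
  rw [MeasureTheory.integral_indicator measurableSet_Iic,
    MeasureTheory.Measure.restrict_restrict measurableSet_Iic]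
  rw [Set.inter_comm, Set.Ioc_inter_Iic, MeasureTheory.setIntegral_const]
  rw [Real.volume_real_Ioc]
  rw [max_eq_left (by simp [le_min_iff]; constructor <;> [exact hθ.le; exact hc])]
  simp [min_def]

/-- Key bound for Equal-Filling: letting `f(θ)` be the number of agents of class `i`
with final utility at least `θ`, for every `θ ∈ (0,1]` and every other class `j`,
class `i`'s optimistic value for class `j`'s fractional bundle is at most
`∫₀^θ f(z) dz + f(θ)`. -/
theorem stmt_18 {A : Type*} [Fintype A] [DecidableEq A] {k : ℕ}
    (classOf : A → Fin k) (L : List (Finset A)) (i j : Fin k) (hij : j ≠ i)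
    (θ : ℝ) (hθ : θ ∈ Set.Ioc (0 : ℝ) 1) :
    VstarFrac L (classAgents classOf i)
        (fun t => ∑ a ∈ classAgents classOf j, efAlloc classOf L t a) ≤
      (∫ z in (0 : ℝ)..θ, efCount classOf L i z) + efCount classOf L i θ := by
  obtain ⟨hθ0, hθ1⟩ := hθ
  have hF0 : ∀ a, 0 ≤ efUtil classOf L L.length a :=
    fun a => (efUtil_bounds classOf L L.length a).1
  -- the integral identity
  have hint : (∫ z in (0:ℝ)..θ, efCount classOf L i z) =
      ∑ a ∈ classAgents classOf i, min θ (efUtil classOf L L.length a) := by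
    have h1 : Set.EqOn (efCount classOf L i)
        (fun z => ∑ a ∈ classAgents classOf i,
          (if z ≤ efUtil classOf L L.length a then (1:ℝ) else 0)) (Set.uIcc 0 θ) := by
      intro z _
      show efCount classOf L i z = _
      unfold efCount
      rw [Finset.card_filter]
      push_cast
      simp
    have hinteg : ∀ a ∈ classAgents classOf i, IntervalIntegrable
        (fun z => if z ≤ efUtil classOf L L.length a then (1:ℝ) else 0)
        MeasureTheory.volume 0 θ := by
      intro a _
      apply AntitoneOn.intervalIntegrable
      intro z _ z' _ hzz'
      by_cases h : z' ≤ efUtil classOf L L.length a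
      · simp [h, le_trans hzz' h]
      · by_cases h2 : z ≤ efUtil classOf L L.length a <;> simp [h, h2]
    rw [intervalIntegral.integral_congr h1, intervalIntegral.integral_finset_sum hinteg]
    exact Finset.sum_congr rfl fun a _ => integral_ite hθ0 (hF0 a)
  have hcount0 : (0:ℝ) ≤ efCount classOf L i θ := by unfold efCount; positivity
  have hsum0 : 0 ≤ ∑ a ∈ classAgents classOf i, min θ (efUtil classOf L L.length a) :=
    Finset.sum_nonneg fun a _ => le_min hθ0.le (hF0 a)
  apply Real.sSup_le
  swap
  · rw [hint]; linarith
  rintro v ⟨x, hx0, hsupp, hxy, hcap, rfl⟩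
  -- key per-step bound
  have key : ∀ t ∈ Finset.range L.length,
      ∑ a ∈ (classAgents classOf i).filter
          (fun a => ¬ θ ≤ efUtil classOf L L.length a), x t a ≤
        ∑ a ∈ classAgents classOf i,
          (min θ (efUtil classOf L (t+1) a) - min θ (efUtil classOf L t a)) := by
    intro t ht
    have hu0 : ∀ a, 0 ≤ efUtil classOf L t a := fun a => (efUtil_bounds classOf L t a).1
    have hu1 : ∀ a, efUtil classOf L t a ≤ 1 := fun a => (efUtil_bounds classOf L t a).2
    have hΔ0 : ∀ a ∈ classAgents classOf i,
        (0:ℝ) ≤ min θ (efUtil classOf L (t+1) a) - min θ (efUtil classOf L t a) := by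
      intro a _
      have := efUtil_mono classOf L (Nat.le_succ t) a
      have := min_le_min (le_refl θ) this
      linarith
    by_cases hex : ∃ a0 ∈ (classAgents classOf i).filter
        (fun a => ¬ θ ≤ efUtil classOf L L.length a), x t a0 ≠ 0
    · obtain ⟨a0, ha0m, ha0x⟩ := hex
      obtain ⟨ha0C, ha0F⟩ := Finset.mem_filter.mp ha0m
      push_neg at ha0F
      have ha0c : classOf a0 = i := by simpa [classAgents] using ha0C
      obtain ⟨-, ha0l, -⟩ := hsupp t a0 ha0x
      have htT : t + 1 ≤ L.length := Finset.mem_range.mp ht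
      have hmono : efUtil classOf L (t+1) a0 ≤ efUtil classOf L L.length a0 :=
        efUtil_mono classOf L htT a0
      have hstep0 : efUtil classOf L (t+1) a0 = efUtil classOf L t a0 +
          efStep classOf (efUtil classOf L t) (likersAt L t) a0 := rfl
      have hsn := efStep_nonneg (classOf := classOf) (u := efUtil classOf L t)
        (likers := likersAt L t) a0
      have ha0u : efUtil classOf L t a0 < θ := by
        rw [hstep0] at hmono; linarith
      have hγ : gam classOf (efUtil classOf L t) (likersAt L t) i < θ := by
        have h2 : efStep classOf (efUtil classOf L t) (likersAt L t) a0 =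
            max (gam classOf (efUtil classOf L t) (likersAt L t) i
              - efUtil classOf L t a0) 0 := by
          rw [efStep_eq, if_pos ha0l, ha0c]
        have h3 := le_max_left (gam classOf (efUtil classOf L t) (likersAt L t) i
          - efUtil classOf L t a0) (0:ℝ)
        rw [hstep0, h2] at hmono
        linarith
      have hk := step_key (likers := likersAt L t) hu0 hu1 i j hθ1 ha0c ha0l hγ ha0u
      calc ∑ a ∈ (classAgents classOf i).filter
              (fun a => ¬ θ ≤ efUtil classOf L L.length a), x t a
          ≤ ∑ a ∈ classAgents classOf i, x t a :=
            Finset.sum_le_sum_of_subset_of_nonneg (Finset.filter_subset _ _)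
              (fun a _ _ => hx0 t a)
        _ ≤ ∑ a ∈ classAgents classOf j, efAlloc classOf L t a := hxy t
        _ = ∑ a ∈ classAgents classOf j,
              efStep classOf (efUtil classOf L t) (likersAt L t) a := rfl
        _ ≤ ∑ a ∈ classAgents classOf i,
              (min θ (efUtil classOf L t a +
                efStep classOf (efUtil classOf L t) (likersAt L t) a)
                - min θ (efUtil classOf L t a)) := hk
        _ = ∑ a ∈ classAgents classOf i,
              (min θ (efUtil classOf L (t+1) a) - min θ (efUtil classOf L t a)) := rfl
    · have : ∑ a ∈ (classAgents classOf i).filter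
          (fun a => ¬ θ ≤ efUtil classOf L L.length a), x t a = 0 :=
        Finset.sum_eq_zero fun a ha => by
          by_contra h; exact hex ⟨a, ha, h⟩
      rw [this]
      exact Finset.sum_nonneg hΔ0
  -- assemble
  have hsplit : ∑ t ∈ Finset.range L.length, ∑ a ∈ classAgents classOf i, x t a =
      (∑ a ∈ (classAgents classOf i).filter
          (fun a => θ ≤ efUtil classOf L L.length a), ∑ t ∈ Finset.range L.length, x t a) +
      ∑ a ∈ (classAgents classOf i).filter
          (fun a => ¬ θ ≤ efUtil classOf L L.length a), ∑ t ∈ Finset.range L.length, x t a := by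
    rw [Finset.sum_comm, Finset.sum_filter_add_sum_filter_not]
  have hpart1 : (∑ a ∈ (classAgents classOf i).filter
      (fun a => θ ≤ efUtil classOf L L.length a), ∑ t ∈ Finset.range L.length, x t a)
      ≤ efCount classOf L i θ := by
    unfold efCount
    calc _ ≤ ∑ a ∈ (classAgents classOf i).filter
          (fun a => θ ≤ efUtil classOf L L.length a), (1:ℝ) :=
        Finset.sum_le_sum fun a _ => hcap a
      _ = _ := by simp
  have hpart2 : (∑ a ∈ (classAgents classOf i).filter
      (fun a => ¬ θ ≤ efUtil classOf L L.length a), ∑ t ∈ Finset.range L.length, x t a)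
      ≤ ∑ a ∈ classAgents classOf i, min θ (efUtil classOf L L.length a) := by
    rw [Finset.sum_comm]
    calc _ ≤ ∑ t ∈ Finset.range L.length, ∑ a ∈ classAgents classOf i,
          (min θ (efUtil classOf L (t+1) a) - min θ (efUtil classOf L t a)) :=
        Finset.sum_le_sum key
      _ = ∑ a ∈ classAgents classOf i, ∑ t ∈ Finset.range L.length,
          (min θ (efUtil classOf L (t+1) a) - min θ (efUtil classOf L t a)) :=
        Finset.sum_comm
      _ = ∑ a ∈ classAgents classOf i, min θ (efUtil classOf L L.length a) := by
        refine Finset.sum_congr rfl fun a _ => ?_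
        rw [Finset.sum_range_sub (fun t => min θ (efUtil classOf L t a))]
        have : efUtil classOf L 0 a = 0 := rfl
        rw [this, min_eq_right hθ0.le, sub_zero]
  rw [hint, hsplit]
  linarith

end
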